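/- First-order perturbation of the Mathieu function ce_g with exact remainder: let g be a real number with g ≠ 1 and g ≠ −1, and define p(α) := −cos((g+2)α)/(4(g+1)) + cos((g−2)α)/(4(g−1)). Then for every real h and every real α, the function P(α) := cos(gα) + h²·p(α) satisfies the exact identity P''(α) + (g² − 2h²·cos 2α)·P(α) = −2h⁴·cos(2α)·p(α). In particular p satisfies p''(α) + g²·p(α) = 2·cos(2α)·cos(gα), so P solves Mathieu's equation with parameters (g², h²) up to an error bounded by a constant multiple of h⁴, uniformly in α. -/

import Mathlib

open Real

/-- The first-order correction `p` in Mathieu's expansion of the even periodic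
solution `P₂ = cos gα + h²p + ⋯`. -/
noncomputable def mathieuFirstCorrection (g : ℝ) (α : ℝ) : ℝ :=
  -Real.cos ((g + 2) * α) / (4 * (g + 1)) + Real.cos ((g - 2) * α) / (4 * (g - 1))

lemma mfc_hasDerivAt (g α : ℝ) :
    HasDerivAt (mathieuFirstCorrection g)
      ((g + 2) * Real.sin ((g + 2) * α) / (4 * (g + 1))
        - (g - 2) * Real.sin ((g - 2) * α) / (4 * (g - 1))) α := by
  have h1 : HasDerivAt (fun β : ℝ => Real.cos ((g + 2) * β))
      (-Real.sin ((g + 2) * α) * (g + 2)) α := by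
    simpa using ((hasDerivAt_id α).const_mul (g + 2)).cos
  have h2 : HasDerivAt (fun β : ℝ => Real.cos ((g - 2) * β))
      (-Real.sin ((g - 2) * α) * (g - 2)) α := by
    simpa using ((hasDerivAt_id α).const_mul (g - 2)).cos
  have h := (h1.neg.div_const (4 * (g + 1))).add (h2.div_const (4 * (g - 1)))
  unfold mathieuFirstCorrection
  exact h.congr_deriv (by ring)

lemma mfc_deriv (g : ℝ) :
    deriv (mathieuFirstCorrection g) = fun α =>
      (g + 2) * Real.sin ((g + 2) * α) / (4 * (g + 1))
        - (g - 2) * Real.sin ((g - 2) * α) / (4 * (g - 1)) := by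
  funext α; exact (mfc_hasDerivAt g α).deriv

lemma mfc_deriv2 (g α : ℝ) :
    deriv (deriv (mathieuFirstCorrection g)) α =
      (g + 2) ^ 2 * Real.cos ((g + 2) * α) / (4 * (g + 1))
        - (g - 2) ^ 2 * Real.cos ((g - 2) * α) / (4 * (g - 1)) := by
  rw [mfc_deriv]
  have h1 : HasDerivAt (fun β : ℝ => Real.sin ((g + 2) * β))
      (Real.cos ((g + 2) * α) * (g + 2)) α := by
    simpa using ((hasDerivAt_id α).const_mul (g + 2)).sin
  have h2 : HasDerivAt (fun β : ℝ => Real.sin ((g - 2) * β))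
      (Real.cos ((g - 2) * α) * (g - 2)) α := by
    simpa using ((hasDerivAt_id α).const_mul (g - 2)).sin
  have h := ((h1.const_mul (g + 2)).div_const (4 * (g + 1))).sub
    ((h2.const_mul (g - 2)).div_const (4 * (g - 1)))
  refine h.deriv.trans ?_; ring

lemma cos_sum_eq (g α : ℝ) :
    Real.cos ((g + 2) * α) + Real.cos ((g - 2) * α)
      = 2 * Real.cos (2 * α) * Real.cos (g * α) := by
  have e1 : (g + 2) * α = g * α + 2 * α := by ring
  have e2 : (g - 2) * α = g * α - 2 * α := by ring
  rw [e1, e2, Real.cos_add, Real.cos_sub]; ring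

lemma mfc_ode (g : ℝ) (hg1 : g ≠ 1) (hg2 : g ≠ -1) (α : ℝ) :
    deriv (deriv (mathieuFirstCorrection g)) α + g ^ 2 * mathieuFirstCorrection g α =
      2 * Real.cos (2 * α) * Real.cos (g * α) := by
  rw [mfc_deriv2, ← cos_sum_eq, mathieuFirstCorrection]
  have hA : g + 1 ≠ 0 := fun h => hg2 (by linarith)
  have hB : g - 1 ≠ 0 := fun h => hg1 (by linarith)
  field_simp
  ring

/-- first-order perturbation of the Mathieu function `ce_g`
with exact remainder. -/
theorem mathieu_first_order_perturbation
    (g : ℝ) (hg1 : g ≠ 1) (hg2 : g ≠ -1) :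
    (∀ h α : ℝ,
      deriv (deriv (fun β : ℝ => Real.cos (g * β) + h ^ 2 * mathieuFirstCorrection g β)) α +
          (g ^ 2 - 2 * h ^ 2 * Real.cos (2 * α)) *
            (Real.cos (g * α) + h ^ 2 * mathieuFirstCorrection g α) =
        -2 * h ^ 4 * Real.cos (2 * α) * mathieuFirstCorrection g α) ∧
    (∀ α : ℝ,
      deriv (deriv (mathieuFirstCorrection g)) α + g ^ 2 * mathieuFirstCorrection g α =
        2 * Real.cos (2 * α) * Real.cos (g * α)) := by
  constructor
  · intro h α
    have hd1 : deriv (fun β : ℝ => Real.cos (g * β) + h ^ 2 * mathieuFirstCorrection g β)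
        = fun β => -Real.sin (g * β) * g
          + h ^ 2 * ((g + 2) * Real.sin ((g + 2) * β) / (4 * (g + 1))
            - (g - 2) * Real.sin ((g - 2) * β) / (4 * (g - 1))) := by
      funext β
      have hc : HasDerivAt (fun β : ℝ => Real.cos (g * β)) (-Real.sin (g * β) * g) β := by
        simpa using ((hasDerivAt_id β).const_mul g).cos
      exact (hc.add ((mfc_hasDerivAt g β).const_mul (h ^ 2))).deriv
    rw [hd1]
    have hs1 : HasDerivAt (fun β : ℝ => Real.sin ((g + 2) * β))
        (Real.cos ((g + 2) * α) * (g + 2)) α := by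
      simpa using ((hasDerivAt_id α).const_mul (g + 2)).sin
    have hs2 : HasDerivAt (fun β : ℝ => Real.sin ((g - 2) * β))
        (Real.cos ((g - 2) * α) * (g - 2)) α := by
      simpa using ((hasDerivAt_id α).const_mul (g - 2)).sin
    have hs : HasDerivAt (fun β : ℝ => Real.sin (g * β)) (Real.cos (g * α) * g) α := by
      simpa using ((hasDerivAt_id α).const_mul g).sin
    have hD : HasDerivAt (fun β : ℝ => -Real.sin (g * β) * g
          + h ^ 2 * ((g + 2) * Real.sin ((g + 2) * β) / (4 * (g + 1))
            - (g - 2) * Real.sin ((g - 2) * β) / (4 * (g - 1))))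
        (-(Real.cos (g * α) * g) * g
          + h ^ 2 * ((g + 2) * (Real.cos ((g + 2) * α) * (g + 2)) / (4 * (g + 1))
            - (g - 2) * (Real.cos ((g - 2) * α) * (g - 2)) / (4 * (g - 1)))) α :=
      ((hs.neg.mul_const g)).add
        ((((hs1.const_mul (g + 2)).div_const (4 * (g + 1))).sub
          ((hs2.const_mul (g - 2)).div_const (4 * (g - 1)))).const_mul (h ^ 2))
    rw [hD.deriv, mathieuFirstCorrection]
    have hA : g + 1 ≠ 0 := fun h => hg2 (by linarith)
    have hB : g - 1 ≠ 0 := fun h => hg1 (by linarith)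
    have key := cos_sum_eq g α
    field_simp
    ring_nf at key ⊢
    linear_combination (4 * h ^ 2 * (g ^ 2 - 1)) * key
  · exact mfc_ode g hg1 hg2
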